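/- Let a > 0 and n > 0. The integral ∫_{4n}^∞ e^{−a√(t−n)} t² dt is finite, and the quantity (n/27) e^{a√(2n)} ∫_{4n}^∞ e^{−a√(t−n)} t² dt tends to 0 faster than n² as n → ∞; in particular its square root is o(n). -/

import Mathlib

open MeasureTheory Filter

-- pointwise bound on the integrand
lemma gf_ptwise (a n : ℝ) (ha : 0 < a) (hn : 0 < n) :
    ∀ t ∈ Set.Ioi (4 * n), Real.exp (-a * Real.sqrt (t - n)) * t ^ 2 ≤
      (Real.exp (-(9 / 10 * a) * Real.sqrt (3 * n)) * (8 ^ 8 * (4 / 3) ^ 4 / (a / 10) ^ 8)) *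
        t ^ (-2 : ℝ) := by
  intro t ht
  simp only [Set.mem_Ioi] at ht
  have ht0 : 0 < t := by linarith
  have htn : 0 < t - n := by linarith
  have h3n : 3 * n ≤ t - n := by linarith
  have h34 : 3 / 4 * t ≤ t - n := by linarith
  set s := Real.sqrt (t - n) with hs
  have hs0 : 0 < s := Real.sqrt_pos.mpr htn
  have hb : 0 < a / 10 := by linarith
  have hx : 0 < a / 10 * s / 8 := by positivity
  have key1 : (a / 10 * s / 8) ^ 8 ≤ Real.exp (a / 10 * s) := by
    have h1 : a / 10 * s / 8 ≤ Real.exp (a / 10 * s / 8) :=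
      le_trans (by linarith) (Real.add_one_le_exp _)
    calc (a / 10 * s / 8) ^ 8 ≤ (Real.exp (a / 10 * s / 8)) ^ 8 :=
          pow_le_pow_left₀ hx.le h1 8
      _ = Real.exp (a / 10 * s) := by
          rw [← Real.exp_nat_mul]; congr 1; push_cast; ring
  have key2 : Real.exp (-(a / 10) * s) ≤ 8 ^ 8 / ((a / 10) ^ 8 * s ^ 8) := by
    rw [show -(a / 10) * s = -(a / 10 * s) by ring, Real.exp_neg, inv_eq_one_div,
      div_le_div_iff₀ (Real.exp_pos _) (by positivity)]
    have h := mul_le_mul_of_nonneg_right key1 (show (0:ℝ) ≤ 8 ^ 8 by norm_num)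
    calc 1 * ((a / 10) ^ 8 * s ^ 8) = (a / 10 * s / 8) ^ 8 * 8 ^ 8 := by ring
      _ ≤ Real.exp (a / 10 * s) * 8 ^ 8 := h
      _ = 8 ^ 8 * Real.exp (a / 10 * s) := by ring
  have hs8 : s ^ 8 = (t - n) ^ 4 := by
    rw [hs, show (8 : ℕ) = 2 * 4 from rfl, pow_mul, Real.sq_sqrt htn.le]
  have ht4 : (3 / 4) ^ 4 * t ^ 4 ≤ (t - n) ^ 4 := by
    calc (3 / 4 : ℝ) ^ 4 * t ^ 4 = (3 / 4 * t) ^ 4 := by ring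
      _ ≤ (t - n) ^ 4 := pow_le_pow_left₀ (by positivity) h34 4
  have key3 : Real.exp (-(a / 10) * s) * t ^ 2 ≤
      8 ^ 8 * (4 / 3) ^ 4 / (a / 10) ^ 8 * t ^ (-2 : ℝ) := by
    have htr : t ^ (-2 : ℝ) = (t ^ 2)⁻¹ := by
      rw [show (-2 : ℝ) = -(2 : ℕ) by norm_num, Real.rpow_neg ht0.le, Real.rpow_natCast]
    rw [htr, ← div_eq_mul_inv, le_div_iff₀ (by positivity : (0:ℝ) < t ^ 2)]
    have hE : Real.exp (-(a / 10) * s) ≤ 8 ^ 8 / ((a / 10) ^ 8 * (t - n) ^ 4) := hs8 ▸ key2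
    have ht4' : t ^ 2 * t ^ 2 ≤ (4 / 3) ^ 4 * (t - n) ^ 4 := by
      have h := mul_le_mul_of_nonneg_left ht4 (show (0:ℝ) ≤ (4 / 3 : ℝ) ^ 4 by norm_num)
      nlinarith [h]
    have hane : a ≠ 0 := ha.ne'
    have htne : t - n ≠ 0 := htn.ne'
    calc Real.exp (-(a / 10) * s) * t ^ 2 * t ^ 2
        = Real.exp (-(a / 10) * s) * (t ^ 2 * t ^ 2) := by ring
      _ ≤ 8 ^ 8 / ((a / 10) ^ 8 * (t - n) ^ 4) * ((4 / 3) ^ 4 * (t - n) ^ 4) :=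
          mul_le_mul hE ht4' (by positivity) (by positivity)
      _ = 8 ^ 8 * (4 / 3) ^ 4 / (a / 10) ^ 8 := by field_simp
  -- combine
  have split : Real.exp (-a * s) = Real.exp (-(9 / 10 * a) * s) * Real.exp (-(a / 10) * s) := by
    rw [← Real.exp_add]; ring_nf
  have mono : Real.exp (-(9 / 10 * a) * s) ≤ Real.exp (-(9 / 10 * a) * Real.sqrt (3 * n)) := by
    apply Real.exp_le_exp.mpr
    have : Real.sqrt (3 * n) ≤ s := Real.sqrt_le_sqrt h3n
    nlinarith
  calc Real.exp (-a * s) * t ^ 2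
      = Real.exp (-(9 / 10 * a) * s) * (Real.exp (-(a / 10) * s) * t ^ 2) := by
        rw [split]; ring
    _ ≤ Real.exp (-(9 / 10 * a) * Real.sqrt (3 * n)) *
          (8 ^ 8 * (4 / 3) ^ 4 / (a / 10) ^ 8 * t ^ (-2 : ℝ)) := by
        apply mul_le_mul mono key3 (by positivity) (Real.exp_pos _).le
    _ = (Real.exp (-(9 / 10 * a) * Real.sqrt (3 * n)) * (8 ^ 8 * (4 / 3) ^ 4 / (a / 10) ^ 8)) *
          t ^ (-2 : ℝ) := by ring

lemma gf_integrable (a n : ℝ) (ha : 0 < a) (hn : 0 < n) :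
    IntegrableOn (fun t => Real.exp (-a * Real.sqrt (t - n)) * t ^ 2) (Set.Ioi (4 * n)) volume := by
  have h4n : (0 : ℝ) < 4 * n := by linarith
  set K := Real.exp (-(9 / 10 * a) * Real.sqrt (3 * n)) * (8 ^ 8 * (4 / 3) ^ 4 / (a / 10) ^ 8)
  have hg : IntegrableOn (fun t : ℝ => K * t ^ (-2 : ℝ)) (Set.Ioi (4 * n)) volume :=
    (integrableOn_Ioi_rpow_of_lt (by norm_num) h4n).const_mul K
  apply Integrable.mono' hg
  · apply Continuous.aestronglyMeasurable
    fun_prop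
  · rw [ae_restrict_iff' measurableSet_Ioi]
    filter_upwards with t ht
    rw [Real.norm_eq_abs, abs_of_nonneg (by positivity)]
    exact gf_ptwise a n ha hn t ht

lemma gf_integral_bound (a n : ℝ) (ha : 0 < a) (hn : 0 < n) :
    (∫ t in Set.Ioi (4 * n), Real.exp (-a * Real.sqrt (t - n)) * t ^ 2) ≤
      Real.exp (-(9 / 10 * a) * Real.sqrt (3 * n)) * (8 ^ 8 * (4 / 3) ^ 4 / (a / 10) ^ 8) / (4 * n) := by
  have h4n : (0 : ℝ) < 4 * n := by linarith
  set K := Real.exp (-(9 / 10 * a) * Real.sqrt (3 * n)) * (8 ^ 8 * (4 / 3) ^ 4 / (a / 10) ^ 8) with hK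
  have hg : IntegrableOn (fun t : ℝ => K * t ^ (-2 : ℝ)) (Set.Ioi (4 * n)) volume :=
    (integrableOn_Ioi_rpow_of_lt (by norm_num) h4n).const_mul K
  calc (∫ t in Set.Ioi (4 * n), Real.exp (-a * Real.sqrt (t - n)) * t ^ 2)
      ≤ ∫ t in Set.Ioi (4 * n), K * t ^ (-2 : ℝ) :=
        setIntegral_mono_on (gf_integrable a n ha hn) hg measurableSet_Ioi
          (gf_ptwise a n ha hn)
    _ = K * ∫ t in Set.Ioi (4 * n), t ^ (-2 : ℝ) := integral_const_mul K _
    _ = K / (4 * n) := by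
        rw [integral_Ioi_rpow_of_lt (by norm_num) h4n]
        norm_num
        rw [Real.rpow_neg_one]
        field_simp

theorem green_function_tail_integral (a : ℝ) (ha : 0 < a) :
    (∀ n : ℝ, 0 < n → IntegrableOn
      (fun t => Real.exp (-a * Real.sqrt (t - n)) * t ^ 2) (Set.Ioi (4 * n)) volume) ∧
    Tendsto (fun n : ℝ => Real.sqrt (n / 27 * Real.exp (a * Real.sqrt (2 * n)) *
        ∫ t in Set.Ioi (4 * n), Real.exp (-a * Real.sqrt (t - n)) * t ^ 2) / n)
      atTop (nhds 0) := by
  constructor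
  · exact fun n hn => gf_integrable a n ha hn
  · set C := (8 : ℝ) ^ 8 * (4 / 3) ^ 4 / (a / 10) ^ 8 with hC
    have hC0 : 0 < C := by positivity
    -- upper envelope
    set u := fun n : ℝ => Real.sqrt (C / 108 * Real.exp (-(a / 20) * Real.sqrt n)) with hu
    have hulim : Tendsto u atTop (nhds 0) := by
      have hsq : Tendsto Real.sqrt atTop atTop := by
        apply Tendsto.congr' _ (tendsto_rpow_atTop (by norm_num : (0:ℝ) < 1/2))
        filter_upwards [eventually_ge_atTop (0 : ℝ)] with x hx
        exact (Real.sqrt_eq_rpow x).symm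
      have h0 : Tendsto (fun n : ℝ => a / 20 * Real.sqrt n) atTop atTop :=
        Tendsto.const_mul_atTop (by linarith : (0:ℝ) < a / 20) hsq
      have h1 : Tendsto (fun n : ℝ => -(a / 20) * Real.sqrt n) atTop atBot := by
        have h := tendsto_neg_atTop_atBot.comp h0
        refine h.congr fun x => ?_
        simp [Function.comp, neg_mul]
      have h2 : Tendsto (fun n : ℝ => C / 108 * Real.exp (-(a / 20) * Real.sqrt n)) atTop
          (nhds 0) := by
        have := (Real.tendsto_exp_atBot.comp h1).const_mul (C / 108)
        simpa using this
      have := (Real.continuous_sqrt.tendsto 0).comp h2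
      simpa [hu, Function.comp_def] using this
    apply tendsto_of_tendsto_of_tendsto_of_le_of_le' tendsto_const_nhds hulim
    · filter_upwards [eventually_ge_atTop (1 : ℝ)] with n hn
      positivity
    · filter_upwards [eventually_ge_atTop (1 : ℝ)] with n hn
      have hn0 : (0 : ℝ) < n := by linarith
      have hI := gf_integral_bound a n ha hn0
      have hF : n / 27 * Real.exp (a * Real.sqrt (2 * n)) *
          ∫ t in Set.Ioi (4 * n), Real.exp (-a * Real.sqrt (t - n)) * t ^ 2 ≤
          C / 108 * Real.exp (-(a / 20) * Real.sqrt n) := by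
        have step1 : n / 27 * Real.exp (a * Real.sqrt (2 * n)) *
            (∫ t in Set.Ioi (4 * n), Real.exp (-a * Real.sqrt (t - n)) * t ^ 2) ≤
            n / 27 * Real.exp (a * Real.sqrt (2 * n)) *
            (Real.exp (-(9 / 10 * a) * Real.sqrt (3 * n)) * C / (4 * n)) := by
          apply mul_le_mul_of_nonneg_left hI (by positivity)
        have step2 : n / 27 * Real.exp (a * Real.sqrt (2 * n)) *
            (Real.exp (-(9 / 10 * a) * Real.sqrt (3 * n)) * C / (4 * n)) =
            C / 108 * Real.exp (a * Real.sqrt (2 * n) + -(9 / 10 * a) * Real.sqrt (3 * n)) := by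
          rw [Real.exp_add]
          field_simp
          ring
        have step3 : a * Real.sqrt (2 * n) + -(9 / 10 * a) * Real.sqrt (3 * n) ≤
            -(a / 20) * Real.sqrt n := by
          rw [Real.sqrt_mul (by norm_num : (0:ℝ) ≤ 2), Real.sqrt_mul (by norm_num : (0:ℝ) ≤ 3)]
          have hsn : 0 ≤ Real.sqrt n := Real.sqrt_nonneg n
          have h2 : Real.sqrt 2 ^ 2 = 2 := Real.sq_sqrt (by norm_num)
          have h3 : Real.sqrt 3 ^ 2 = 3 := Real.sq_sqrt (by norm_num)
          have h2n : 0 ≤ Real.sqrt 2 := Real.sqrt_nonneg 2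
          have h3n : 0 ≤ Real.sqrt 3 := Real.sqrt_nonneg 3
          have key : Real.sqrt 2 + 1 / 20 ≤ 9 / 10 * Real.sqrt 3 := by
            nlinarith [sq_nonneg (Real.sqrt 2 - 29/20), sq_nonneg (Real.sqrt 3 - 17/10)]
          nlinarith [mul_le_mul_of_nonneg_right key hsn, mul_nonneg ha.le hsn]
        calc _ ≤ C / 108 * Real.exp (a * Real.sqrt (2 * n) + -(9 / 10 * a) * Real.sqrt (3 * n)) := by
              rw [← step2]; exact step1
          _ ≤ C / 108 * Real.exp (-(a / 20) * Real.sqrt n) := by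
              apply mul_le_mul_of_nonneg_left (Real.exp_le_exp.mpr step3) (by positivity)
      calc Real.sqrt (n / 27 * Real.exp (a * Real.sqrt (2 * n)) *
            ∫ t in Set.Ioi (4 * n), Real.exp (-a * Real.sqrt (t - n)) * t ^ 2) / n
          ≤ Real.sqrt (n / 27 * Real.exp (a * Real.sqrt (2 * n)) *
            ∫ t in Set.Ioi (4 * n), Real.exp (-a * Real.sqrt (t - n)) * t ^ 2) := by
            apply div_le_self (Real.sqrt_nonneg _) hn
        _ ≤ u n := Real.sqrt_le_sqrt hF
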